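/- Let n ≥ 1, let J ∈ ℝ^{n×n}, let λ ∈ ℝ be a simple eigenvalue of J with eigenvector v ≠ 0, Jv = λv, and let V ∈ ℝ^{n×(n−1)} have rank n−1 with Vᵀv = 0. Suppose w ∈ ℝⁿ, μ ∈ ℝ and b ∈ ℝⁿ satisfy the bordered linear system (J − λI)w − μv = −b and vᵀw = 0. Then w is given explicitly by w = −V (Vᵀ(J − λI)V)⁻¹ Vᵀ b. -/

import Mathlib

open Matrix

/-- Euclidean norm of a vector in `ℝⁿ`. -/
noncomputable def e2norm {n : ℕ} (v : Fin n → ℝ) : ℝ := Real.sqrt (∑ i, v i ^ 2)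

/-- Frobenius norm of a real matrix. -/
noncomputable def frobNorm {n m : ℕ} (M : Matrix (Fin n) (Fin m) ℝ) : ℝ :=
  Real.sqrt (∑ i, ∑ j, M i j ^ 2)

/-- Spectral norm: the supremum of `‖M x‖` over Euclidean-unit vectors `x`. -/
noncomputable def specNorm {n m : ℕ} (M : Matrix (Fin n) (Fin m) ℝ) : ℝ :=
  sSup ((fun x => e2norm (M.mulVec x)) '' {x : Fin m → ℝ | e2norm x = 1})

open Polynomial Module

lemma aux_charmatrix_map_comp {n : ℕ} (J : Matrix (Fin n) (Fin n) ℝ) (lam : ℝ) :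
    (charmatrix J).map (fun p => p.comp (X + C lam)) = charmatrix (J - lam • 1) := by
  ext i j
  by_cases h : i = j
  · subst h
    simp only [Matrix.map_apply, charmatrix_apply_eq, Matrix.sub_apply, Matrix.smul_apply,
      Matrix.one_apply_eq, sub_comp, X_comp, C_comp, smul_eq_mul, mul_one, map_sub]
    ring_nf
  · simp only [Matrix.map_apply, charmatrix_apply_ne _ _ _ h, Matrix.sub_apply,
      Matrix.smul_apply, Matrix.one_apply_ne h, neg_comp, C_comp, smul_eq_mul, mul_zero, sub_zero]

lemma aux_charpoly_sub_smul_one {n : ℕ} (J : Matrix (Fin n) (Fin n) ℝ) (lam : ℝ) :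
    (J - lam • 1).charpoly = J.charpoly.comp (X + C lam) := by
  have hf : ∀ p : ℝ[X], p.comp (X + C lam)
      = (aeval (X + C lam) : ℝ[X] →ₐ[ℝ] ℝ[X]).toRingHom p := fun p =>
    Polynomial.comp_eq_aeval
  have h2 : (aeval (X + C lam) : ℝ[X] →ₐ[ℝ] ℝ[X]).toRingHom.mapMatrix (charmatrix J)
      = charmatrix (J - lam • 1) := by
    rw [RingHom.mapMatrix_apply, ← aux_charmatrix_map_comp J lam]
    ext i j
    simp [Matrix.map_apply, hf]
  show (charmatrix (J - lam • 1)).det = ((charmatrix J).det).comp (X + C lam)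
  rw [← h2, ← RingHom.map_det, ← hf]

/-- If `lam` is a simple eigenvalue then the kernel of `(J - lam•1)²` is spanned by `v`. -/
lemma aux_kernel_sq_le_span {n : ℕ} (J : Matrix (Fin n) (Fin n) ℝ) (lam : ℝ)
    (hsimple : Polynomial.rootMultiplicity lam J.charpoly = 1)
    (v : Fin n → ℝ) (hv : v ≠ 0) (heig : J.mulVec v = lam • v) :
    ∀ x, (J - lam • 1).mulVec ((J - lam • 1).mulVec x) = 0 → ∃ c : ℝ, x = c • v := by
  set g := J - lam • 1 with hg
  have hgv : g.mulVec v = 0 := by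
    rw [hg, sub_mulVec, heig, smul_mulVec, one_mulVec, sub_self]
  set φ : Module.End ℝ (Fin n → ℝ) := g.mulVecLin with hφ
  have hφeq : φ = Matrix.toLin' g := by
    ext x
    simp [hφ, Matrix.toLin'_apply]
  have hφch : LinearMap.charpoly φ = g.charpoly := by
    rw [← LinearMap.charpoly_toMatrix φ (Pi.basisFun ℝ (Fin n))]
    congr 1
    rw [LinearMap.toMatrix_eq_toMatrix', hφeq, LinearMap.toMatrix'_toLin']
  have hdim : finrank ℝ (φ.maxGenEigenspace 0) = 1 := by
    rw [LinearMap.finrank_maxGenEigenspace_zero_eq, hφch, hg, aux_charpoly_sub_smul_one,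
      ← Polynomial.rootMultiplicity_eq_natTrailingDegree, hsimple]
  have hv_mem : v ∈ φ.maxGenEigenspace 0 := by
    rw [Module.End.mem_maxGenEigenspace]
    exact ⟨1, by simp [hφ, Matrix.mulVecLin_apply, hgv]⟩
  have hle : Submodule.span ℝ {v} ≤ φ.maxGenEigenspace 0 := by
    rw [Submodule.span_le, Set.singleton_subset_iff]
    exact hv_mem
  have heq : Submodule.span ℝ {v} = φ.maxGenEigenspace 0 :=
    Submodule.eq_of_le_of_finrank_le hle (by rw [hdim, finrank_span_singleton hv])
  intro x hx
  have hx' : x ∈ φ.maxGenEigenspace 0 := by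
    rw [Module.End.mem_maxGenEigenspace]
    refine ⟨2, ?_⟩
    have : ((φ - (0:ℝ) • (1 : Module.End ℝ (Fin n → ℝ))) ^ 2) x = φ (φ x) := by
      simp [pow_two, Module.End.mul_apply]
    rw [this]
    simpa [hφ, Matrix.mulVecLin_apply] using hx
  rw [← heq] at hx'
  obtain ⟨c, hc⟩ := Submodule.mem_span_singleton.mp hx'
  exact ⟨c, hc.symm⟩

/-- the solution `w` of the bordered system
`(J - λI)w - μv = -b`, `vᵀw = 0` is `w = -V (Vᵀ(J - λI)V)⁻¹ Vᵀ b`. -/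
theorem bordered_system_solution_formula
    {n : ℕ} (hn : 1 ≤ n) (J : Matrix (Fin n) (Fin n) ℝ) (lam : ℝ)
    (hsimple : Polynomial.rootMultiplicity lam J.charpoly = 1)
    (v : Fin n → ℝ) (hv : v ≠ 0) (heig : J.mulVec v = lam • v)
    (V : Matrix (Fin n) (Fin (n - 1)) ℝ)
    (hrank : V.rank = n - 1) (hVv : Vᵀ.mulVec v = 0)
    (w : Fin n → ℝ) (mu : ℝ) (b : Fin n → ℝ)
    (hsys : (J - lam • 1).mulVec w - mu • v = -b)
    (horth : v ⬝ᵥ w = 0) :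
    w = -(V.mulVec ((Vᵀ * (J - lam • 1) * V)⁻¹.mulVec (Vᵀ.mulVec b))) := by
  have hA := aux_kernel_sq_le_span J lam hsimple v hv heig
  set g := J - lam • 1 with hg
  have hgv : g.mulVec v = 0 := by
    rw [hg, sub_mulVec, heig, smul_mulVec, one_mulVec, sub_self]
  have hvv : v ⬝ᵥ v ≠ 0 := fun h => hv (dotProduct_self_eq_zero.mp h)
  -- rank facts
  have hrankV : finrank ℝ (LinearMap.range V.mulVecLin) = n - 1 := hrank
  have hVinj : ∀ y, V.mulVec y = 0 → y = 0 := by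
    rw [← Matrix.ker_mulVecLin_eq_bot_iff]
    have h := LinearMap.finrank_range_add_finrank_ker V.mulVecLin
    rw [Module.finrank_fin_fun, hrankV] at h
    have hker0 : finrank ℝ (LinearMap.ker V.mulVecLin) = 0 := by omega
    exact Submodule.finrank_eq_zero.mp hker0
  -- kernel of Vᵀ is the span of v
  have hrankT : finrank ℝ (LinearMap.range Vᵀ.mulVecLin) = n - 1 := by
    show Vᵀ.rank = n - 1
    rw [Matrix.rank_transpose, hrank]
  have hkerT1 : finrank ℝ (LinearMap.ker Vᵀ.mulVecLin) = 1 := by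
    have h := LinearMap.finrank_range_add_finrank_ker Vᵀ.mulVecLin
    rw [Module.finrank_fin_fun, hrankT] at h
    omega
  have hkerT : LinearMap.ker Vᵀ.mulVecLin = Submodule.span ℝ {v} := by
    refine (Submodule.eq_of_le_of_finrank_le ?_ ?_).symm
    · rw [Submodule.span_le, Set.singleton_subset_iff]
      simp only [SetLike.mem_coe, LinearMap.mem_ker, Matrix.mulVecLin_apply]
      exact hVv
    · rw [hkerT1, finrank_span_singleton hv]
  -- the range of V is the orthogonal hyperplane of v
  let l : (Fin n → ℝ) →ₗ[ℝ] ℝ :=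
    { toFun := fun x => v ⬝ᵥ x
      map_add' := fun a c => dotProduct_add v a c
      map_smul' := fun c a => by simp [dotProduct_smul] }
  have hlapp : ∀ x, l x = v ⬝ᵥ x := fun _ => rfl
  have hlrange : LinearMap.range l = ⊤ := by
    rw [Submodule.eq_top_iff']
    intro c
    refine ⟨(c / (v ⬝ᵥ v)) • v, ?_⟩
    rw [hlapp, dotProduct_smul, smul_eq_mul, div_mul_cancel₀ c hvv]
  have hkerl : finrank ℝ (LinearMap.ker l) = n - 1 := by
    have h := LinearMap.finrank_range_add_finrank_ker l
    rw [hlrange, finrank_top, Module.finrank_self, Module.finrank_fin_fun] at h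
    omega
  have hdotV : ∀ y, v ⬝ᵥ V.mulVec y = 0 := by
    intro y
    rw [dotProduct_mulVec, ← Matrix.mulVec_transpose, hVv, zero_dotProduct]
  have hrangeV : LinearMap.range V.mulVecLin = LinearMap.ker l := by
    apply Submodule.eq_of_le_of_finrank_le
    · rintro x ⟨y, rfl⟩
      simp only [LinearMap.mem_ker, Matrix.mulVecLin_apply]
      rw [hlapp]
      exact hdotV y
    · rw [hkerl, hrankV]
  -- w lies in the range of V
  have hw_mem : w ∈ LinearMap.range V.mulVecLin := by
    rw [hrangeV]
    simpa [LinearMap.mem_ker, hlapp] using horth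
  obtain ⟨y, hy⟩ := hw_mem
  rw [Matrix.mulVecLin_apply] at hy
  -- the bordered matrix is invertible
  set M : Matrix (Fin (n - 1)) (Fin (n - 1)) ℝ := Vᵀ * g * V with hM
  have hM0 : ∀ z, M.mulVec z = 0 → z = 0 := by
    intro z hz0
    have h1 : Vᵀ.mulVec (g.mulVec (V.mulVec z)) = 0 := by
      rw [Matrix.mulVec_mulVec, Matrix.mulVec_mulVec]
      rw [hM] at hz0
      exact hz0
    have h2 : g.mulVec (V.mulVec z) ∈ LinearMap.ker Vᵀ.mulVecLin :=
      LinearMap.mem_ker.mpr h1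
    rw [hkerT] at h2
    obtain ⟨c, hc⟩ := Submodule.mem_span_singleton.mp h2
    have h3 : g.mulVec (g.mulVec (V.mulVec z)) = 0 := by
      rw [← hc, Matrix.mulVec_smul, hgv, smul_zero]
    obtain ⟨d, hd⟩ := hA _ h3
    have h4 : v ⬝ᵥ V.mulVec z = 0 := hdotV z
    rw [hd, dotProduct_smul, smul_eq_mul, mul_eq_zero] at h4
    have hd0 : d = 0 := h4.resolve_right hvv
    apply hVinj
    rw [hd, hd0, zero_smul]
  have hMinj : Function.Injective M.mulVec := by
    have hbot := Matrix.ker_mulVecLin_eq_bot_iff.mpr hM0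
    have hinj := LinearMap.ker_eq_bot.mp hbot
    rwa [Matrix.coe_mulVecLin] at hinj
  have hMdet : IsUnit M.det :=
    (Matrix.isUnit_iff_isUnit_det M).mp (Matrix.mulVec_injective_iff_isUnit.mp hMinj)
  -- solve the system
  have hgw : g.mulVec w = mu • v - b := by
    have h := hsys
    rw [sub_eq_iff_eq_add] at h
    rw [h]
    abel
  have hMy : M.mulVec y = -(Vᵀ.mulVec b) := by
    rw [hM, Matrix.mul_assoc, ← Matrix.mulVec_mulVec, ← Matrix.mulVec_mulVec, hy, hgw,
      Matrix.mulVec_sub, Matrix.mulVec_smul, hVv, smul_zero, zero_sub]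
  have hy' : y = M⁻¹.mulVec (-(Vᵀ.mulVec b)) := by
    rw [← hMy, Matrix.mulVec_mulVec, Matrix.nonsing_inv_mul M hMdet, Matrix.one_mulVec]
  rw [← hy, hy', Matrix.mulVec_neg, Matrix.mulVec_neg]
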